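/- Let R = (W, V, h) be a linear reservoir system of dimensions (n, m, d) whose dynamic coupling W is a contractive full-cycle permutation, let E₁, …, E_{nm} be a basis of the space of n×m complex matrices with all entries in {−1, 1}, and write V = ∑_{i=1}^{nm} a_i E_i with a_i ∈ ℂ. Define R' = (W', V', h') of dimensions (n²m, m, d) by: W' block-diagonal with nm identical blocks equal to W, V' the vertical stack of E₁, …, E_{nm}, and h'(x^{(1)}, …, x^{(nm)}) = h(∑_{i=1}^{nm} a_i x^{(i)}). Then R' is equivalent to R: for every input stream c bounded by M and every t ∈ ℤ₋ the outputs of R and R' coincide. -/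

import Mathlib

/-- Operator norm of a complex matrix w.r.t. Euclidean norms. -/
noncomputable def opNorm {ι κ : Type*} [Fintype ι] [Fintype κ] [DecidableEq κ]
    (A : Matrix ι κ ℂ) : ℝ :=
  ‖LinearMap.toContinuousLinearMap (Matrix.toEuclideanLin A)‖

/-- The state of the linear reservoir system `(W, V, ·)` at time `t` on input stream `c`. -/
noncomputable def resState {ι κ : Type*} [Fintype ι] [DecidableEq ι] [Fintype κ]
    (W : Matrix ι ι ℂ) (V : Matrix ι κ ℂ)
    (c : ℤ → EuclideanSpace ℂ κ) (t : ℤ) : EuclideanSpace ℂ ι :=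
  ∑' k : ℕ, WithLp.toLp 2 (Matrix.mulVec (W ^ k * V) (c (t - k)))

/-- The permutation matrix associated to a permutation `σ` (entry `i j` is `1` iff `σ i = j`). -/
def permMatrix {ι : Type*} [DecidableEq ι] (σ : Equiv.Perm ι) : Matrix ι ι ℂ :=
  Matrix.of fun i j => if σ i = j then 1 else 0

/-- A permutation is a full cycle iff it acts transitively. -/
def IsFullCycle {ι : Type*} (σ : Equiv.Perm ι) : Prop :=
  ∀ i j : ι, ∃ k : ℕ, (σ ^ k) i = j

def IsContractiveFullCycle {ι : Type*} [DecidableEq ι] (W : Matrix ι ι ℂ) : Prop :=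
  ∃ (l : ℝ) (σ : Equiv.Perm ι), 0 < l ∧ l < 1 ∧ IsFullCycle σ ∧ W = (l : ℂ) • permMatrix σ

/-- Two linear reservoir systems are `ε`-close for input streams bounded by `Mb`. -/
def EpsClose {ι₁ ι₂ κ od : Type*} [Fintype ι₁] [DecidableEq ι₁] [Fintype ι₂] [DecidableEq ι₂]
    [Fintype κ] [Fintype od] (Mb ε : ℝ)
    (W₁ : Matrix ι₁ ι₁ ℂ) (V₁ : Matrix ι₁ κ ℂ) (h₁ : EuclideanSpace ℂ ι₁ → EuclideanSpace ℂ od)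
    (W₂ : Matrix ι₂ ι₂ ℂ) (V₂ : Matrix ι₂ κ ℂ) (h₂ : EuclideanSpace ℂ ι₂ → EuclideanSpace ℂ od) :
    Prop :=
  ∀ c : ℤ → EuclideanSpace ℂ κ, (∀ t : ℤ, t ≤ 0 → ‖c t‖ ≤ Mb) →
    ∀ t : ℤ, t ≤ 0 → ‖h₁ (resState W₁ V₁ c t) - h₂ (resState W₂ V₂ c t)‖ < ε

/-- `h'` is `h` with linearly transformed domain. -/
def LinTransformedDomain {ι₁ ι₂ od : Type*} [Fintype ι₂]
    (h : EuclideanSpace ℂ ι₁ → EuclideanSpace ℂ od)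
    (h' : EuclideanSpace ℂ ι₂ → EuclideanSpace ℂ od) : Prop :=
  ∃ A : Matrix ι₁ ι₂ ℂ, ∀ x : EuclideanSpace ℂ ι₂, h' x = h (WithLp.toLp 2 (Matrix.mulVec A x))

lemma permMatrix_mul_apply {ι κ : Type*} [Fintype ι] [DecidableEq ι] (σ : Equiv.Perm ι)
    (A : Matrix ι κ ℂ) (r : ι) (j : κ) : (permMatrix σ * A) r j = A (σ r) j := by
  simp [Matrix.mul_apply, permMatrix, ite_mul]

lemma permMatrix_mul {ι : Type*} [Fintype ι] [DecidableEq ι] (σ τ : Equiv.Perm ι) :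
    permMatrix σ * permMatrix τ = permMatrix (τ * σ) := by
  ext r j
  rw [permMatrix_mul_apply]
  simp [permMatrix, Equiv.Perm.mul_apply]
  congr

lemma permMatrix_pow {ι : Type*} [Fintype ι] [DecidableEq ι] (σ : Equiv.Perm ι) (k : ℕ) :
    permMatrix σ ^ k = permMatrix (σ ^ k) := by
  induction k with
  | zero => ext r j; simp [permMatrix, Matrix.one_apply, eq_comm]
  | succ k ih => rw [pow_succ, ih, permMatrix_mul, ← pow_succ']

lemma euclid_coord_le {ι : Type*} [Fintype ι] (x : EuclideanSpace ℂ ι) (i : ι) :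
    ‖x i‖ ≤ ‖x‖ := by
  rw [EuclideanSpace.norm_eq]
  have h1 : ‖x i‖ ^ 2 ≤ ∑ j, ‖x j‖ ^ 2 :=
    Finset.single_le_sum (f := fun j => ‖x j‖ ^ 2) (fun j _ => sq_nonneg _) (Finset.mem_univ i)
  calc ‖x i‖ = Real.sqrt (‖x i‖ ^ 2) := (Real.sqrt_sq (norm_nonneg _)).symm
    _ ≤ _ := Real.sqrt_le_sqrt h1

lemma summable_euclid {ι : Type*} [Fintype ι] {f : ℕ → ι → ℂ}
    (hf : ∀ i, Summable fun k => f k i) : Summable fun k => WithLp.toLp 2 (f k) := by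
  exact (PiLp.continuousLinearEquiv 2 ℂ (fun _ : ι => ℂ)).symm.summable.mpr
    (Pi.summable.mpr fun i => hf i)

lemma state_coord {ι κ : Type*} [Fintype ι] [DecidableEq ι] [Fintype κ]
    (l : ℝ) (σ : Equiv.Perm ι) (A : Matrix ι κ ℂ) (v : EuclideanSpace ℂ κ) (k : ℕ) (r : ι) :
    ((((l : ℂ) • permMatrix σ) ^ k) * A).mulVec v r
      = (l : ℂ) ^ k * ∑ j, A ((σ ^ k) r) j * v j := by
  rw [smul_pow, permMatrix_pow, Matrix.smul_mul, Matrix.smul_mulVec]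
  simp only [Pi.smul_apply, smul_eq_mul]
  congr 1
  simp [Matrix.mulVec, dotProduct, permMatrix_mul_apply]

lemma summable_state {ι κ : Type*} [Fintype ι] [DecidableEq ι] [Fintype κ]
    (l : ℝ) (hl0 : 0 < l) (hl1 : l < 1) (σ : Equiv.Perm ι) (A : Matrix ι κ ℂ)
    (v : ℕ → EuclideanSpace ℂ κ) (Mv : ℝ) (hv : ∀ k, ‖v k‖ ≤ Mv) :
    Summable fun k => WithLp.toLp 2 (Matrix.mulVec ((((l : ℂ) • permMatrix σ) ^ k) * A) (v k)) := by
  apply summable_euclid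
  intro r
  apply Summable.of_norm_bounded (g := fun k => ((∑ s, ∑ j, ‖A s j‖) * Mv) * l ^ k)
    (((summable_geometric_of_lt_one hl0.le hl1)).mul_left _)
  intro k
  rw [state_coord]
  rw [norm_mul]
  have h1 : ‖(l : ℂ) ^ k‖ = l ^ k := by
    rw [norm_pow, Complex.norm_real, Real.norm_of_nonneg hl0.le]
  rw [h1, mul_comm (_ * Mv) (l ^ k)]
  apply mul_le_mul_of_nonneg_left _ (pow_nonneg hl0.le k)
  calc ‖∑ j, A ((σ ^ k) r) j * v k j‖ ≤ ∑ j, ‖A ((σ ^ k) r) j * v k j‖ := norm_sum_le _ _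
    _ ≤ ∑ j, ‖A ((σ ^ k) r) j‖ * Mv := by
        apply Finset.sum_le_sum
        intro j _
        rw [norm_mul]
        exact mul_le_mul_of_nonneg_left ((euclid_coord_le (v k) j).trans (hv k))
          (norm_nonneg _)
    _ = (∑ j, ‖A ((σ ^ k) r) j‖) * Mv := by rw [Finset.sum_mul]
    _ ≤ (∑ s, ∑ j, ‖A s j‖) * Mv := by
        apply mul_le_mul_of_nonneg_right _ ((norm_nonneg (v 0)).trans (hv 0))
        exact Finset.single_le_sum (f := fun s => ∑ j, ‖A s j‖)
          (fun s _ => Finset.sum_nonneg fun j _ => norm_nonneg _) (Finset.mem_univ _)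

lemma blockDiag_coord {n m N : ℕ} (W : Matrix (Fin n) (Fin n) ℂ)
    (B : Fin N → Matrix (Fin n) (Fin m) ℂ) (v : EuclideanSpace ℂ (Fin m)) (k : ℕ)
    (r : Fin n) (i : Fin N) :
    (((Matrix.blockDiagonal fun _ : Fin N => W) ^ k
        * Matrix.of fun (p : Fin n × Fin N) (j : Fin m) => B p.2 p.1 j).mulVec v) (r, i)
      = ((W ^ k * B i).mulVec v) r := by
  have hpow : (Matrix.blockDiagonal fun _ : Fin N => W) ^ k
      = Matrix.blockDiagonal fun _ : Fin N => W ^ k := by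
    rw [← Matrix.blockDiagonal_pow]; rfl
  rw [hpow]
  simp only [Matrix.mulVec, dotProduct, Matrix.mul_apply, Matrix.of_apply,
    Matrix.blockDiagonal_apply, Fintype.sum_prod_type, ite_mul, zero_mul,
    Finset.sum_ite_eq, Finset.mem_univ, if_true]

lemma blockDiag_perm {n N : ℕ} (l : ℝ) (σ : Equiv.Perm (Fin n)) :
    (Matrix.blockDiagonal fun _ : Fin N => ((l : ℂ) • permMatrix σ))
      = (l : ℂ) • permMatrix (Equiv.prodCongr σ (Equiv.refl (Fin N))) := by
  ext ⟨r, i⟩ ⟨s, i'⟩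
  simp only [Matrix.blockDiagonal_apply, Matrix.smul_apply, permMatrix, Matrix.of_apply,
    Equiv.prodCongr_apply, Equiv.coe_refl, Prod.map, id, Prod.mk.injEq, smul_eq_mul]
  by_cases h1 : i = i' <;> by_cases h2 : σ r = s <;> simp [h1, h2]

theorem smcr_construction_equivalent
    (n m d : ℕ) (W : Matrix (Fin n) (Fin n) ℂ) (hW : IsContractiveFullCycle W)
    (V : Matrix (Fin n) (Fin m) ℂ)
    (h : EuclideanSpace ℂ (Fin n) → EuclideanSpace ℂ (Fin d)) (hh : Continuous h)
    (b : Module.Basis (Fin (n * m)) ℂ (Matrix (Fin n) (Fin m) ℂ))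
    (hb : ∀ (i : Fin (n * m)) (r : Fin n) (c : Fin m), b i r c = 1 ∨ b i r c = -1)
    (a : Fin (n * m) → ℂ) (hV : V = ∑ i, a i • b i)
    (M : ℝ) (hM : 0 < M) :
    ∀ c : ℤ → EuclideanSpace ℂ (Fin m), (∀ t : ℤ, t ≤ 0 → ‖c t‖ ≤ M) →
      ∀ t : ℤ, t ≤ 0 →
        h (resState W V c t) =
          h (WithLp.toLp 2 (fun r : Fin n => ∑ i : Fin (n * m),
              a i * resState (Matrix.blockDiagonal fun _ : Fin (n * m) => W)
                (Matrix.of fun (p : Fin n × Fin (n * m)) (j : Fin m) => b p.2 p.1 j)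
                c t (r, i))) := by
  obtain ⟨l, σ, hl0, hl1, -, hWeq⟩ := hW
  intro c hc t ht
  have hc' : ∀ k : ℕ, ‖c (t - k)‖ ≤ M := fun k => hc _ (by omega)
  set W' : Matrix (Fin n × Fin (n * m)) (Fin n × Fin (n * m)) ℂ :=
    Matrix.blockDiagonal fun _ : Fin (n * m) => W with hW'def
  set V' : Matrix (Fin n × Fin (n * m)) (Fin m) ℂ :=
    Matrix.of fun (p : Fin n × Fin (n * m)) (j : Fin m) => b p.2 p.1 j with hV'def
  have hW'eq : W' = (l : ℂ) • permMatrix (Equiv.prodCongr σ (Equiv.refl (Fin (n * m)))) := by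
    rw [hW'def, hWeq, blockDiag_perm]
  -- summabilities
  have S1 : Summable fun k : ℕ => WithLp.toLp 2 (Matrix.mulVec (W ^ k * V) (c (t - k))) := by
    rw [hWeq]; exact summable_state l hl0 hl1 σ V _ M hc'
  have S2 : Summable fun k : ℕ => WithLp.toLp 2 (Matrix.mulVec (W' ^ k * V') (c (t - k))) := by
    rw [hW'eq]; exact summable_state l hl0 hl1 _ V' _ M hc'
  have Sb : ∀ i : Fin (n * m),
      Summable fun k : ℕ => WithLp.toLp 2 (Matrix.mulVec (W ^ k * b i) (c (t - k))) := by
    intro i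
    rw [hWeq]; exact summable_state l hl0 hl1 σ (b i) _ M hc'
  -- coordinate summabilities
  have Sbc : ∀ (i : Fin (n * m)) (r : Fin n),
      Summable fun k : ℕ => (Matrix.mulVec (W ^ k * b i) (c (t - k))) r := by
    intro i r
    have := (EuclideanSpace.proj (𝕜 := ℂ) r).summable (Sb i)
    simpa using this
  have key : resState W V c t = WithLp.toLp 2 (fun r : Fin n => ∑ i : Fin (n * m),
      a i * resState W' V' c t (r, i)) := by
    ext r
    show _ = ∑ i : Fin (n * m), a i * resState W' V' c t (r, i)
    have eL : resState W V c t r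
        = ∑' k : ℕ, (Matrix.mulVec (W ^ k * V) (c (t - k))) r := by
      exact (ContinuousLinearMap.map_tsum (EuclideanSpace.proj (𝕜 := ℂ) r) S1)
    have eR : ∀ i : Fin (n * m), resState W' V' c t (r, i)
        = ∑' k : ℕ, (Matrix.mulVec (W ^ k * b i) (c (t - k))) r := by
      intro i
      have := (ContinuousLinearMap.map_tsum (EuclideanSpace.proj (𝕜 := ℂ) (r, i)) S2)
      rw [show resState W' V' c t (r, i)
          = ∑' k : ℕ, (Matrix.mulVec (W' ^ k * V') (c (t - k))) (r, i) from this]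
      congr 1
      funext k
      exact blockDiag_coord W (fun i => b i) (c (t - k)) k r i
    rw [eL]
    have eR' : ∀ i : Fin (n * m), a i * resState W' V' c t (r, i)
        = ∑' k : ℕ, a i * (Matrix.mulVec (W ^ k * b i) (c (t - k))) r := fun i => by
      rw [eR i, tsum_mul_left]
    rw [Finset.sum_congr rfl fun i _ => eR' i,
      ← Summable.tsum_finsetSum (fun i _ => ((Sbc i r).mul_left (a i)))]
    congr 1
    funext k
    rw [hV, Matrix.mul_sum]
    simp only [Matrix.mul_smul, Matrix.mulVec, dotProduct, Matrix.sum_apply,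
      Matrix.smul_apply, smul_eq_mul, Finset.sum_mul, Finset.mul_sum]
    rw [Finset.sum_comm]
    congr 1; funext j; congr 1; funext i; ring
  rw [key]
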